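/- Fix m ≥ 1 and let z be the degree-m metallic mean sequence defined by z_0 = z_1 = 1 and z_n = m·z_{n-1} + z_{n-2}. Then every positive integer n has a unique representation n = Σ_{i=1}^{r} ε_i z_i with ε_i ∈ {0,…,m} and the property that whenever ε_{i+1} = m, then ε_i = 0. -/

import Mathlib

/-- Degree-`m` metallic mean sequence with z 0 = z 1 = 1 and
`z (n+2) = m * z (n+1) + z n`. -/
def met (m : ℕ) : ℕ → ℕ
  | 0 => 1
  | 1 => 1
  | n + 2 => m * met m (n + 1) + met m n

lemma met_pos (m : ℕ) : ∀ n, 1 ≤ met m n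
  | 0 => le_refl 1
  | 1 => le_refl 1
  | n + 2 => le_trans (met_pos m n) (Nat.le_add_left _ _)

lemma met_le_succ (m : ℕ) (hm : 1 ≤ m) : ∀ n, met m n ≤ met m (n + 1)
  | 0 => le_refl 1
  | n + 1 => by
      show met m (n+1) ≤ m * met m (n+1) + met m n
      calc met m (n+1) = 1 * met m (n+1) := (one_mul _).symm
        _ ≤ m * met m (n+1) := Nat.mul_le_mul_right _ hm
        _ ≤ m * met m (n+1) + met m n := Nat.le_add_right _ _

lemma lt_met (m : ℕ) (hm : 1 ≤ m) : ∀ n, n < met m (n + 1)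
  | 0 => by simp [met]
  | 1 => by simp [met]; omega
  | n + 2 => by
      have h1 := lt_met m hm (n + 1)
      have h2 := met_pos m (n + 1)
      have e1 : met m (n + 1 + 1) = met m (n + 2) := rfl
      show n + 2 < m * met m (n + 2) + met m (n + 1)
      have h3 : met m (n + 2) ≤ m * met m (n + 2) :=
        le_trans (by omega) (Nat.mul_le_mul_right _ hm)
      omega

/-- Key bound: a valid digit string up to `r` sums to less than `met m (r+1)`. -/
lemma sum_lt (m : ℕ) (hm : 1 ≤ m) (ε : ℕ → ℕ) (h1 : ∀ i, ε i ≤ m)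
    (h2 : ∀ i, ε (i + 1) = m → ε i = 0) :
    ∀ r, ∑ i ∈ Finset.Icc 1 r, ε i * met m i < met m (r + 1) := by
  intro r
  induction r using Nat.strong_induction_on with
  | _ r ih =>
    match r with
    | 0 => simp [met]
    | 1 =>
      simp only [Finset.Icc_self, Finset.sum_singleton]
      show ε 1 * met m 1 < met m 2
      simp [met]
      nlinarith [h1 1]
    | r + 2 =>
      have e1 : met m (r + 1 + 1) = met m (r + 2) := rfl
      have e2 : met m (r + 2 + 1) = m * met m (r + 2) + met m (r + 1) := rfl
      have e0 : r + 1 + 1 = r + 2 := rfl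
      rw [Finset.sum_Icc_succ_top (by omega : 1 ≤ r + 2)]
      by_cases htop : ε (r + 2) = m
      · have hz : ε (r + 1) = 0 := h2 (r + 1) htop
        rw [Finset.sum_Icc_succ_top (by omega : 1 ≤ r + 1), hz]
        have hS := ih r (by omega)
        simp only [e0]
        rw [htop]
        omega
      · have hε : ε (r + 2) + 1 ≤ m := by have := h1 (r + 2); omega
        have hS := ih (r + 1) (by omega)
        simp only [e0] at hS ⊢
        have h4 : (ε (r + 2) + 1) * met m (r + 2) ≤ m * met m (r + 2) :=
          Nat.mul_le_mul_right _ hε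
        have h5 := met_pos m (r + 1)
        have h6 : ε (r + 2) * met m (r + 2) + met m (r + 2) ≤ m * met m (r + 2) := by
          rw [add_mul, one_mul] at h4; exact h4
        omega

lemma exists_rep (m : ℕ) (hm : 1 ≤ m) :
    ∀ r, ∀ n, n < met m (r + 1) →
      ∃ ε : ℕ → ℕ, (∀ i, ε i ≤ m) ∧ (∀ i, ε (i + 1) = m → ε i = 0) ∧
        (∀ i, i ∉ Finset.Icc 1 r → ε i = 0) ∧ n = ∑ i ∈ Finset.Icc 1 r, ε i * met m i := by
  intro r
  induction r using Nat.strong_induction_on with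
  | _ r ih =>
    match r with
    | 0 =>
      intro n hn
      have : n = 0 := by simpa [met] using hn
      exact ⟨fun _ => 0, fun i => Nat.zero_le m, fun i h => rfl, fun i _ => rfl, by simp [this]⟩
    | 1 =>
      intro n hn
      have hn' : n ≤ m := by
        have h2 : met m (1 + 1) = m * 1 + 1 := rfl
        omega
      refine ⟨fun i => if i = 1 then n else 0, ?_, ?_, ?_, ?_⟩
      · intro i; by_cases h : i = 1 <;> simp [h]; omega
      · intro i h
        by_cases hi : i = 0
        · simp [hi]
        · by_cases hi1 : i + 1 = 1
          · omega
          · simp [hi1, hi] at h; omega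
      · intro i hi
        have : i ≠ 1 := by simp [Finset.mem_Icc] at hi; omega
        simp [this]
      · simp [met]
    | r + 2 =>
      intro n hn
      have hzpos : 1 ≤ met m (r + 2) := met_pos m (r + 2)
      obtain ⟨q, n', hdiv, hn'lt⟩ :
          ∃ q n', n = q * met m (r + 2) + n' ∧ n' < met m (r + 2) :=
        ⟨n / met m (r + 2), n % met m (r + 2),
          by rw [Nat.mul_comm]; exact (Nat.div_add_mod n _).symm,
          Nat.mod_lt _ (by omega)⟩
      have hrec : met m (r + 2 + 1) = m * met m (r + 2) + met m (r + 1) := rfl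
      have e1 : met m (r + 1 + 1) = met m (r + 2) := rfl
      have hqle : q ≤ m := by
        by_contra h
        push_neg at h
        have h5 : (m + 1) * met m (r + 2) ≤ q * met m (r + 2) :=
          Nat.mul_le_mul_right _ (by omega)
        have hle : met m (r + 1) ≤ met m (r + 2) := met_le_succ m hm (r + 1)
        nlinarith
      by_cases hqm : q = m
      · -- top digit m, remainder < met m (r+1), use ih at r
        have hn'' : n' < met m (r + 1) := by subst hqm; omega
        obtain ⟨δ, hδ1, hδ2, hδ3, hδ4⟩ := ih r (by omega) n' hn''
        refine ⟨fun i => if i = r + 2 then m else δ i, ?_, ?_, ?_, ?_⟩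
        · intro i; by_cases h : i = r + 2 <;> simp [h, hδ1 i]
        · intro i h
          by_cases hi : i = r + 2
          · exfalso
            have h1 : i + 1 ≠ r + 2 := by omega
            simp only [h1, if_false] at h
            have := hδ3 (i + 1) (by simp [Finset.mem_Icc]; omega)
            omega
          · simp only [hi, if_false]
            by_cases hi1 : i + 1 = r + 2
            · exact hδ3 i (by simp [Finset.mem_Icc]; omega)
            · simp only [hi1, if_false] at h
              exact hδ2 i h
        · intro i hi
          have h1 : i ≠ r + 2 := by simp [Finset.mem_Icc] at hi ⊢; omega
          simp only [h1, if_false]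
          exact hδ3 i (by simp [Finset.mem_Icc] at hi ⊢; omega)
        · have e0 : r + 1 + 1 = r + 2 := rfl
          rw [Finset.sum_Icc_succ_top (by omega : 1 ≤ r + 2),
            Finset.sum_Icc_succ_top (by omega : 1 ≤ r + 1)]
          have e1' : ∀ i ∈ Finset.Icc 1 r,
              (if i = r + 2 then m else δ i) * met m i = δ i * met m i := by
            intro i hi
            simp only [Finset.mem_Icc] at hi
            have : i ≠ r + 2 := by omega
            simp [this]
          rw [Finset.sum_congr rfl e1']
          have h3 : δ (r + 1) = 0 := hδ3 (r + 1) (by simp [Finset.mem_Icc])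
          rw [hqm] at hdiv
          simp only [e0]
          simp [h3]
          omega
      · -- top digit q < m, remainder < met m (r+2), use ih at r+1
        obtain ⟨δ, hδ1, hδ2, hδ3, hδ4⟩ := ih (r + 1) (by omega) n' hn'lt
        refine ⟨fun i => if i = r + 2 then q else δ i, ?_, ?_, ?_, ?_⟩
        · intro i; by_cases h : i = r + 2 <;> simp [h, hδ1 i]; omega
        · intro i h
          by_cases hi : i = r + 2
          · exfalso
            have h1 : i + 1 ≠ r + 2 := by omega
            simp only [h1, if_false] at h
            have := hδ3 (i + 1) (by simp [Finset.mem_Icc]; omega)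
            omega
          · simp only [hi, if_false]
            by_cases hi1 : i + 1 = r + 2
            · simp [hi1] at h; omega
            · simp only [hi1, if_false] at h
              exact hδ2 i h
        · intro i hi
          have h1 : i ≠ r + 2 := by simp [Finset.mem_Icc] at hi ⊢; omega
          simp only [h1, if_false]
          exact hδ3 i (by simp [Finset.mem_Icc] at hi ⊢; omega)
        · have e0 : r + 1 + 1 = r + 2 := rfl
          rw [Finset.sum_Icc_succ_top (by omega : 1 ≤ r + 2)]
          have e1' : ∀ i ∈ Finset.Icc 1 (r + 1),
              (if i = r + 2 then q else δ i) * met m i = δ i * met m i := by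
            intro i hi
            simp only [Finset.mem_Icc] at hi
            have : i ≠ r + 2 := by omega
            simp [this]
          rw [Finset.sum_congr rfl e1']
          simp only [e0]
          simp only [if_true, ite_true]
          rw [← hδ4]
          omega

lemma uniq (m : ℕ) (hm : 1 ≤ m) :
    ∀ t : ℕ, ∀ ε δ : ℕ → ℕ,
      (∀ i, ε i ≤ m) → (∀ i, ε (i + 1) = m → ε i = 0) →
      (∀ i, i ∉ Finset.Icc 1 t → ε i = 0) →
      (∀ i, δ i ≤ m) → (∀ i, δ (i + 1) = m → δ i = 0) →
      (∀ i, i ∉ Finset.Icc 1 t → δ i = 0) →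
      (∑ i ∈ Finset.Icc 1 t, ε i * met m i) = (∑ i ∈ Finset.Icc 1 t, δ i * met m i) →
      ∀ i, ε i = δ i := by
  intro t
  induction t with
  | zero =>
    intro ε δ _ _ hε3 _ _ hδ3 _ i
    rw [hε3 i (by simp), hδ3 i (by simp)]
  | succ t ih =>
    intro ε δ hε1 hε2 hε3 hδ1 hδ2 hδ3 hsum i
    have key : ∀ a b : ℕ → ℕ, (∀ i, a i ≤ m) → (∀ i, a (i + 1) = m → a i = 0) →
        a (t + 1) < b (t + 1) →
        ∑ i ∈ Finset.Icc 1 (t + 1), a i * met m i <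
          ∑ i ∈ Finset.Icc 1 (t + 1), b i * met m i := by
      intro a b ha1 ha2 hab
      rw [Finset.sum_Icc_succ_top (by omega : 1 ≤ t + 1),
        Finset.sum_Icc_succ_top (by omega : 1 ≤ t + 1)]
      have h1 := sum_lt m hm a ha1 ha2 t
      have h2 : (a (t + 1) + 1) * met m (t + 1) ≤ b (t + 1) * met m (t + 1) :=
        Nat.mul_le_mul_right _ hab
      rw [add_mul, one_mul] at h2
      omega
    have htop : ε (t + 1) = δ (t + 1) := by
      by_contra h
      rcases Nat.lt_or_ge (ε (t + 1)) (δ (t + 1)) with hlt | hge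
      · exact absurd hsum (Nat.ne_of_lt (key ε δ hε1 hε2 hlt))
      · exact absurd hsum.symm (Nat.ne_of_lt (key δ ε hδ1 hδ2 (by omega)))
    have trunc : ∀ (a : ℕ → ℕ), (∀ i, a i ≤ m) → (∀ i, a (i + 1) = m → a i = 0) →
        (∀ i, i ∉ Finset.Icc 1 (t + 1) → a i = 0) →
        (∀ i, (if i = t + 1 then 0 else a i) ≤ m) ∧
        (∀ i, (if i + 1 = t + 1 then 0 else a (i + 1)) = m →
          (if i = t + 1 then 0 else a i) = 0) ∧
        (∀ i, i ∉ Finset.Icc 1 t → (if i = t + 1 then 0 else a i) = 0) ∧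
        (∑ i ∈ Finset.Icc 1 t, (if i = t + 1 then 0 else a i) * met m i
          = ∑ i ∈ Finset.Icc 1 t, a i * met m i) := by
      intro a ha1 ha2 ha3
      refine ⟨?_, ?_, ?_, ?_⟩
      · intro i; by_cases h : i = t + 1 <;> simp [h, ha1 i]
      · intro i h
        by_cases hi : i = t + 1
        · simp [hi]
        · simp only [hi, if_false]
          by_cases hi1 : i + 1 = t + 1
          · simp [hi1] at h; omega
          · simp only [hi1, if_false] at h
            exact ha2 i h
      · intro i hi
        by_cases h : i = t + 1
        · simp [h]
        · simp only [h, if_false]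
          exact ha3 i (by simp [Finset.mem_Icc] at hi ⊢; omega)
      · apply Finset.sum_congr rfl
        intro i hi
        simp only [Finset.mem_Icc] at hi
        have : i ≠ t + 1 := by omega
        simp [this]
    obtain ⟨he1, he2, he3, he4⟩ := trunc ε hε1 hε2 hε3
    obtain ⟨hd1, hd2, hd3, hd4⟩ := trunc δ hδ1 hδ2 hδ3
    have hsum' : ∑ i ∈ Finset.Icc 1 t, (if i = t + 1 then 0 else ε i) * met m i
        = ∑ i ∈ Finset.Icc 1 t, (if i = t + 1 then 0 else δ i) * met m i := by
      rw [he4, hd4]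
      rw [Finset.sum_Icc_succ_top (by omega : 1 ≤ t + 1),
        Finset.sum_Icc_succ_top (by omega : 1 ≤ t + 1), htop] at hsum
      omega
    have hEq := ih (fun i => if i = t + 1 then 0 else ε i)
      (fun i => if i = t + 1 then 0 else δ i) he1 he2 he3 hd1 hd2 hd3 hsum'
    by_cases h : i = t + 1
    · rw [h]; exact htop
    · have h' := hEq i
      simpa [h] using h'

/-- Metallic mean Zeckendorf theorem: every positive integer has a unique
representation `n = Σ ε_i z_i` with digits `ε_i ∈ {0,…,m}` such that
`ε_{i+1} = m` implies `ε_i = 0`. -/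
theorem metallic_zeckendorf (m : ℕ) (hm : 1 ≤ m) (n : ℕ) (hn : 1 ≤ n) :
    ∃! ε : ℕ → ℕ,
      (∀ i, ε i ≤ m) ∧
      (∀ i, ε (i + 1) = m → ε i = 0) ∧
      (∃ r, (∀ i, i ∉ Finset.Icc 1 r → ε i = 0) ∧
        n = ∑ i ∈ Finset.Icc 1 r, ε i * met m i) := by
  obtain ⟨ε, hε1, hε2, hε3, hε4⟩ := exists_rep m hm n n (lt_met m hm n)
  refine ⟨ε, ⟨hε1, hε2, n, hε3, hε4⟩, ?_⟩
  rintro δ ⟨hδ1, hδ2, s, hδ3, hδ4⟩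
  funext i
  have ext : ∀ (a : ℕ → ℕ) (r : ℕ), r ≤ max n s → (∀ i, i ∉ Finset.Icc 1 r → a i = 0) →
      ∑ i ∈ Finset.Icc 1 (max n s), a i * met m i = ∑ i ∈ Finset.Icc 1 r, a i * met m i := by
    intro a r hr ha
    symm
    apply Finset.sum_subset (Finset.Icc_subset_Icc_right hr)
    intro x _ hx
    rw [ha x hx, zero_mul]
  have hεt : ∀ i, i ∉ Finset.Icc 1 (max n s) → ε i = 0 := by
    intro i hi
    exact hε3 i (by simp [Finset.mem_Icc] at hi ⊢; omega)
  have hδt : ∀ i, i ∉ Finset.Icc 1 (max n s) → δ i = 0 := by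
    intro i hi
    exact hδ3 i (by simp [Finset.mem_Icc] at hi ⊢; omega)
  have hsum : ∑ i ∈ Finset.Icc 1 (max n s), δ i * met m i
      = ∑ i ∈ Finset.Icc 1 (max n s), ε i * met m i := by
    rw [ext δ s (le_max_right _ _) hδ3, ext ε n (le_max_left _ _) hε3, ← hδ4, ← hε4]
  exact uniq m hm (max n s) δ ε hδ1 hδ2 hδt hε1 hε2 hεt hsum i
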